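/- Let L be a finite set, θ₀, θ₁ : L → ℝ, and w₀, w₁, ε ∈ ℝ with w₀ + w₁ = 1, w₁ ≠ 0, and w₀w₁ ≠ ε. Define α(i) = w₀θ₀(i) + w₁θ₁(i) and β(i,j) = (w₀ − ε)θ₀(i)θ₀(j) + (w₁ − ε)θ₁(i)θ₁(j) + ε·θ₀(i)θ₁(j) + ε·θ₁(i)θ₀(j). Let i ∈ L with θ₀(i) ≠ θ₁(i). Then for every j ∈ L with j ≠ i: θ₀(j) = (w₁β(i,j) − α(j)(w₁θ₁(i) + ε(θ₀(i) − θ₁(i)))) / ((w₀w₁ − ε)(θ₀(i) − θ₁(i))) and θ₁(j) = (α(j) − w₀θ₀(j))/w₁. -/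

import Mathlib

theorem stmt_9 {L : Type*} [Fintype L] (θ₀ θ₁ : L → ℝ) (w₀ w₁ ε : ℝ)
    (hw : w₀ + w₁ = 1) (hw1 : w₁ ≠ 0) (hwe : w₀ * w₁ ≠ ε)
    (α : L → ℝ) (hα : ∀ i, α i = w₀ * θ₀ i + w₁ * θ₁ i)
    (β : L → L → ℝ)
    (hβ : ∀ i j, β i j = (w₀ - ε) * (θ₀ i * θ₀ j) + (w₁ - ε) * (θ₁ i * θ₁ j)
        + ε * (θ₀ i * θ₁ j) + ε * (θ₁ i * θ₀ j))
    (i : L) (hi : θ₀ i ≠ θ₁ i) :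
    ∀ j, j ≠ i →
      θ₀ j = (w₁ * β i j - α j * (w₁ * θ₁ i + ε * (θ₀ i - θ₁ i)))
        / ((w₀ * w₁ - ε) * (θ₀ i - θ₁ i)) ∧
      θ₁ j = (α j - w₀ * θ₀ j) / w₁ := by
  intro j _
  have h1 : w₀ * w₁ - ε ≠ 0 := sub_ne_zero.mpr hwe
  have h2 : θ₀ i - θ₁ i ≠ 0 := sub_ne_zero.mpr hi
  constructor
  · rw [hβ, hα]
    rw [eq_div_iff (mul_ne_zero h1 h2)]
    have : w₀ = 1 - w₁ := by linarith
    subst this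
    ring
  · rw [hα]
    field_simp
    ring
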